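/- arXiv:1807.03028 — 2 statements merged into one kernel-verified Lean document; each statement's English description precedes it below -/
import Mathlib

section
/- A group G endowed with a coarse structure 𝓔 is a right coarse group (𝓔 has a base of right invariant entourages, equivalently for every ε ∈ 𝓔 there is ε′ ∈ 𝓔 with B(x,ε)g ⊆ B(xg,ε′) for all x,g ∈ G) if and only if there exists a group bornology 𝓘 on G such that 𝓔 = 𝓔_𝓘, the coarse structure with base {ε_A = {(x,y) : y ∈ {x} ∪ Ax} : A ∈ 𝓘}. -/
open Pointwise

def IsIdeal {X : Type*} (I : Set (Set X)) : Prop :=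
  ∅ ∈ I ∧ (∀ A ∈ I, ∀ B : Set X, B ⊆ A → B ∈ I) ∧ (∀ A ∈ I, ∀ B ∈ I, A ∪ B ∈ I)

def IsBornology {X : Type*} (B : Set (Set X)) : Prop :=
  IsIdeal B ∧ (∀ A : Set X, A.Finite → A ∈ B) ∧ ⋃₀ B = Set.univ

def IsGroupBornology {G : Type*} [Group G] (I : Set (Set G)) : Prop :=
  IsBornology I ∧ ∀ A ∈ I, ∀ B ∈ I, A * B⁻¹ ∈ I

def relComp {X : Type*} (ε δ : Set (X × X)) : Set (X × X) :=
  {p | ∃ y, (p.1, y) ∈ ε ∧ (y, p.2) ∈ δ}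

def relInv {X : Type*} (ε : Set (X × X)) : Set (X × X) :=
  {p | (p.2, p.1) ∈ ε}

def IsBallStructure {X : Type*} (E : Set (Set (X × X))) : Prop :=
  (∀ ε ∈ E, (SetRel.id : Set (X × X)) ⊆ ε) ∧
  (∀ ε ∈ E, ∀ δ ∈ E, ∃ lam ∈ E, relComp ε (relInv δ) ⊆ lam) ∧
  ⋃₀ E = Set.univ

def IsCoarseStructure {X : Type*} (E : Set (Set (X × X))) : Prop :=
  IsBallStructure E ∧
  ∀ ε ∈ E, ∀ δ : Set (X × X), (SetRel.id : Set (X × X)) ⊆ δ → δ ⊆ ε → δ ∈ E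

def ball {X : Type*} (ε : Set (X × X)) (x : X) : Set X :=
  {y | (x, y) ∈ ε}

def IsBoundedIn {X : Type*} (E : Set (Set (X × X))) (B : Set X) : Prop :=
  B = ∅ ∨ ∃ x : X, ∃ ε ∈ E, B ⊆ ball ε x

/-- The entourage `ε_A = {(x,y) : y ∈ {x} ∪ Ax}` determined by `A ⊆ G`. -/
def entOf {G : Type*} [Group G] (A : Set G) : Set (G × G) :=
  {p | p.2 = p.1 ∨ ∃ a ∈ A, p.2 = a * p.1}

/-- The coarse structure `𝓔_𝓘` on a group determined by a group bornology `𝓘`. -/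
def EI {G : Type*} [Group G] (I : Set (Set G)) : Set (Set (G × G)) :=
  {δ | (SetRel.id : Set (G × G)) ⊆ δ ∧ ∃ A ∈ I, δ ⊆ entOf A}


section Aux

variable {X : Type*}

lemma relInv_relInv (ε : Set (X × X)) : relInv (relInv ε) = ε := rfl

lemma cs_exists_mem [Nonempty X] {E : Set (Set (X × X))} (h : IsCoarseStructure E) :
    ∃ ε, ε ∈ E := by
  obtain ⟨x⟩ := ‹Nonempty X›
  have h1 : ((x, x) : X × X) ∈ ⋃₀ E := by rw [h.1.2.2]; trivial
  obtain ⟨ε, hε, -⟩ := h1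
  exact ⟨ε, hε⟩

lemma cs_idRel_mem [Nonempty X] {E : Set (Set (X × X))} (h : IsCoarseStructure E) :
    (SetRel.id : Set (X × X)) ∈ E := by
  obtain ⟨ε, hε⟩ := cs_exists_mem h
  exact h.2 ε hε (SetRel.id : Set (X × X)) subset_rfl (h.1.1 ε hε)

lemma cs_inv_mem [Nonempty X] {E : Set (Set (X × X))} (h : IsCoarseStructure E)
    {δ : Set (X × X)} (hδ : δ ∈ E) : relInv δ ∈ E := by
  obtain ⟨lam, hlam, hsub⟩ := h.1.2.1 (SetRel.id : Set (X × X)) (cs_idRel_mem h) δ hδ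
  have heq : relComp (SetRel.id : Set (X × X)) (relInv δ) = relInv δ := by
    ext ⟨x, z⟩
    constructor
    · rintro ⟨y, hy1, hy2⟩
      have hxy : x = y := hy1
      subst hxy; exact hy2
    · intro hp; exact ⟨x, rfl, hp⟩
  rw [heq] at hsub
  refine h.2 lam hlam (relInv δ) ?_ hsub
  intro p hp
  have : p.1 = p.2 := hp
  show (p.2, p.1) ∈ δ
  rw [this]
  exact h.1.1 δ hδ (SetRel.mem_id.mpr rfl : (p.2, p.2) ∈ (SetRel.id : Set (X × X)))

lemma cs_union_mem [Nonempty X] {E : Set (Set (X × X))} (h : IsCoarseStructure E)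
    {ε δ : Set (X × X)} (hε : ε ∈ E) (hδ : δ ∈ E) : ε ∪ δ ∈ E := by
  obtain ⟨lam, hlam, hsub⟩ := h.1.2.1 ε hε (relInv δ) (cs_inv_mem h hδ)
  rw [relInv_relInv] at hsub
  have hid : (SetRel.id : Set (X × X)) ⊆ ε ∪ δ := fun p hp => Or.inl (h.1.1 ε hε hp)
  refine h.2 lam hlam (ε ∪ δ) hid ?_
  intro p hp
  apply hsub
  rcases hp with hp | hp
  · exact ⟨p.2, hp, h.1.1 δ hδ (SetRel.mem_id.mpr rfl : (p.2, p.2) ∈ (SetRel.id : Set (X × X)))⟩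
  · exact ⟨p.1, h.1.1 ε hε (SetRel.mem_id.mpr rfl : (p.1, p.1) ∈ (SetRel.id : Set (X × X))), hp⟩

end Aux

theorem stmt13 {G : Type*} [Group G] (𝓔 : Set (Set (G × G)))
    (h : IsCoarseStructure 𝓔) :
    (∀ ε ∈ 𝓔, ∃ ε' ∈ 𝓔, ∀ x g y : G, y ∈ ball ε x → y * g ∈ ball ε' (x * g)) ↔
      ∃ 𝓘 : Set (Set G), IsGroupBornology 𝓘 ∧ 𝓔 = EI 𝓘 := by
  obtain ⟨⟨hdiag, hcomp, hcover⟩, hdown⟩ := h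
  have h : IsCoarseStructure 𝓔 := ⟨⟨hdiag, hcomp, hcover⟩, hdown⟩
  constructor
  · intro H
    set 𝓘 : Set (Set G) := {A | ∃ ε ∈ 𝓔, A ⊆ ball ε 1} with h𝓘
    obtain ⟨ε₀, hε₀⟩ := cs_exists_mem h
    have hsingle : ∀ x : G, ({x} : Set G) ∈ 𝓘 := by
      intro x
      have : ((1 : G), x) ∈ ⋃₀ 𝓔 := by rw [hcover]; trivial
      obtain ⟨ε, hε, hx⟩ := this
      exact ⟨ε, hε, fun y hy => by rw [Set.mem_singleton_iff] at hy; subst hy; exact hx⟩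
    have hunion : ∀ A ∈ 𝓘, ∀ B ∈ 𝓘, A ∪ B ∈ 𝓘 := by
      rintro A ⟨ε, hε, hA⟩ B ⟨δ, hδ, hB⟩
      exact ⟨ε ∪ δ, cs_union_mem h hε hδ, fun y hy => hy.elim (fun hy => Or.inl (hA hy)) (fun hy => Or.inr (hB hy))⟩
    refine ⟨𝓘, ⟨⟨⟨⟨ε₀, hε₀, Set.empty_subset _⟩, ?_, hunion⟩, ?_, ?_⟩, ?_⟩, ?_⟩
    · rintro A ⟨ε, hε, hA⟩ B hBA
      exact ⟨ε, hε, hBA.trans hA⟩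
    · -- finite sets
      intro A hA
      refine Set.Finite.induction_on (motive := fun s _ => s ∈ 𝓘) A hA ⟨ε₀, hε₀, Set.empty_subset _⟩ ?_
      intro a s _ _ ih
      rw [Set.insert_eq]
      exact hunion _ (hsingle a) _ ih
    · -- cover
      apply Set.eq_univ_of_forall
      intro x
      exact ⟨{x}, hsingle x, rfl⟩
    · -- A * B⁻¹
      rintro A ⟨ε, hε, hA⟩ B ⟨δ, hδ, hB⟩
      obtain ⟨ε', hε', Hε⟩ := H ε hε
      obtain ⟨δ', hδ', Hδ⟩ := H δ hδ
      obtain ⟨lam, hlam, hsub⟩ := hcomp (relInv δ') (cs_inv_mem h hδ') (relInv ε') (cs_inv_mem h hε')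
      rw [relInv_relInv] at hsub
      refine ⟨lam, hlam, ?_⟩
      intro c hc
      rw [Set.mem_mul] at hc
      obtain ⟨a, ha, b, hb, habc⟩ := hc
      rw [Set.mem_inv] at hb
      subst habc
      apply hsub
      refine ⟨b, ?_, ?_⟩
      · show (b, (1 : G)) ∈ δ'
        have := Hδ 1 b b⁻¹ (hB hb)
        simpa [ball] using this
      · show (b, a * b) ∈ ε'
        have := Hε 1 b a (hA ha)
        simpa [ball] using this
    · -- 𝓔 = EI 𝓘
      ext ε
      constructor
      · intro hε
        obtain ⟨ε', hε', Hε⟩ := H ε hε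
        refine ⟨hdiag ε hε, ball ε' 1, ⟨ε', hε', subset_rfl⟩, ?_⟩
        rintro ⟨x, y⟩ hxy
        refine Or.inr ⟨y * x⁻¹, ?_, ?_⟩
        · have := Hε x x⁻¹ y hxy
          simpa using this
        · simp
      · rintro ⟨hid, A, ⟨ε, hε, hA⟩, hsub⟩
        obtain ⟨ε', hε', Hε⟩ := H ε hε
        refine hdown (ε' ∪ (SetRel.id : Set (G × G))) (cs_union_mem h hε' (cs_idRel_mem h)) _ hid ?_
        rintro ⟨x, y⟩ hp
        rcases hsub hp with h1 | ⟨a, ha, h2⟩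
        · have h1' : y = x := h1
          subst h1'
          exact Or.inr rfl
        · have h2' : y = a * x := h2
          subst h2'
          refine Or.inl ?_
          have := Hε 1 x a (hA ha)
          simpa [ball] using this
  · rintro ⟨𝓘, hI, rfl⟩
    intro ε hε
    obtain ⟨hid, A, hA, hsub⟩ := hε
    refine ⟨entOf A, ⟨fun p hp => Or.inl (show p.1 = p.2 from hp).symm, A, hA, subset_rfl⟩, ?_⟩
    intro x g y hy
    rcases hsub hy with h1 | ⟨a, ha, h2⟩
    · have h1' : y = x := h1
      exact Or.inl (show y * g = x * g by rw [h1'])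
    · have h2' : y = a * x := h2
      exact Or.inr ⟨a, ha, show y * g = a * (x * g) by rw [h2', mul_assoc]⟩
end

section
/- For a group G with coarse structure 𝓔, the following are equivalent: (i) (G,𝓔) is a coarse group (multiplication and inversion are coarse maps); (ii) (G,𝓔) is both a left and a right coarse group; (iii) 𝓔 = 𝓔_𝓘 for some invariant group bornology 𝓘 on G (a group bornology with ∪_{g∈G} g⁻¹Ag ∈ 𝓘 for each A ∈ 𝓘). -/
open Pointwise

/-- The multiplication `G × G → G` is a coarse map (with respect to the
product coarse structure, expressed via its base of product entourages). -/
def MulIsCoarse {G : Type*} [Group G] (E : Set (Set (G × G))) : Prop :=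
  ∀ ε ∈ E, ∀ δ ∈ E, ∃ ε' ∈ E, ∀ x₁ y₁ x₂ y₂ : G,
    (x₁, y₁) ∈ ε → (x₂, y₂) ∈ δ → (x₁ * x₂, y₁ * y₂) ∈ ε'

/-- The inversion is a coarse map. -/
def InvIsCoarse {G : Type*} [Group G] (E : Set (Set (G × G))) : Prop :=
  ∀ ε ∈ E, ∃ ε' ∈ E, ∀ x y : G, (x, y) ∈ ε → (x⁻¹, y⁻¹) ∈ ε'

def IsLeftCoarseGroup {G : Type*} [Group G] (E : Set (Set (G × G))) : Prop :=
  ∀ ε ∈ E, ∃ ε' ∈ E, ∀ g x y : G, (x, y) ∈ ε → (g * x, g * y) ∈ ε'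

def IsRightCoarseGroup {G : Type*} [Group G] (E : Set (Set (G × G))) : Prop :=
  ∀ ε ∈ E, ∃ ε' ∈ E, ∀ g x y : G, (x, y) ∈ ε → (x * g, y * g) ∈ ε'

def IsInvariantGroupBornology {G : Type*} [Group G] (I : Set (Set G)) : Prop :=
  IsGroupBornology I ∧ ∀ A ∈ I, {x : G | ∃ g : G, ∃ a ∈ A, x = g⁻¹ * a * g} ∈ I

section Aux
variable {X : Type*} [Nonempty X] {E : Set (Set (X × X))}

lemma cs_pair (h : IsCoarseStructure E) (x y : X) : ∃ ε ∈ E, (x, y) ∈ ε := by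
  have : (x, y) ∈ ⋃₀ E := by rw [h.1.2.2]; trivial
  obtain ⟨ε, hε, hxy⟩ := this
  exact ⟨ε, hε, hxy⟩

lemma cs_idRel (h : IsCoarseStructure E) : (SetRel.id : Set (X × X)) ∈ E := by
  obtain ⟨x⟩ := ‹Nonempty X›
  obtain ⟨ε, hε, -⟩ := cs_pair h x x
  exact h.2 ε hε (SetRel.id : Set (X × X)) (le_refl _) (h.1.1 ε hε)

lemma cs_inv (h : IsCoarseStructure E) {ε : Set (X × X)} (hε : ε ∈ E) :
    relInv ε ∈ E := by
  obtain ⟨lam, hlam, hsub⟩ := h.1.2.1 (SetRel.id : Set (X × X)) (cs_idRel h) ε hε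
  refine h.2 lam hlam (relInv ε) ?_ ?_
  · rintro ⟨a, b⟩ hab
    rw [SetRel.mem_id] at hab
    subst hab
    exact h.1.1 ε hε (SetRel.mem_id.mpr rfl)
  · intro p hp
    exact hsub ⟨p.1, SetRel.mem_id.mpr rfl, hp⟩

lemma cs_comp (h : IsCoarseStructure E) {ε δ : Set (X × X)} (hε : ε ∈ E)
    (hδ : δ ∈ E) : relComp ε δ ∈ E := by
  obtain ⟨lam, hlam, hsub⟩ := h.1.2.1 ε hε (relInv δ) (cs_inv h hδ)
  refine h.2 lam hlam (relComp ε δ) ?_ ?_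
  · rintro ⟨a, b⟩ hab
    rw [SetRel.mem_id] at hab
    subst hab
    exact ⟨a, h.1.1 ε hε (SetRel.mem_id.mpr rfl), h.1.1 δ hδ (SetRel.mem_id.mpr rfl)⟩
  · intro p hp
    exact hsub hp

lemma cs_union (h : IsCoarseStructure E) {ε δ : Set (X × X)} (hε : ε ∈ E)
    (hδ : δ ∈ E) : ε ∪ δ ∈ E := by
  refine h.2 _ (cs_comp h hε hδ) (ε ∪ δ) ?_ ?_
  · rintro ⟨a, b⟩ hab
    rw [SetRel.mem_id] at hab
    subst hab
    exact Or.inl (h.1.1 ε hε (SetRel.mem_id.mpr rfl))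
  · rintro ⟨a, b⟩ (hab | hab)
    · exact ⟨b, hab, h.1.1 δ hδ (SetRel.mem_id.mpr rfl)⟩
    · exact ⟨a, h.1.1 ε hε (SetRel.mem_id.mpr rfl), hab⟩

end Aux

theorem stmt14 {G : Type*} [Group G] (𝓔 : Set (Set (G × G)))
    (h : IsCoarseStructure 𝓔) :
    ((MulIsCoarse 𝓔 ∧ InvIsCoarse 𝓔) ↔
        (IsLeftCoarseGroup 𝓔 ∧ IsRightCoarseGroup 𝓔)) ∧
    ((IsLeftCoarseGroup 𝓔 ∧ IsRightCoarseGroup 𝓔) ↔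
        ∃ 𝓘 : Set (Set G), IsInvariantGroupBornology 𝓘 ∧ 𝓔 = EI 𝓘) := by
  constructor
  · constructor
    · rintro ⟨hmul, -⟩
      constructor
      · intro ε hε
        obtain ⟨ε', hε', hp⟩ := hmul (SetRel.id : Set (G × G)) (cs_idRel h) ε hε
        exact ⟨ε', hε', fun g x y hxy => hp g g x y (SetRel.mem_id.mpr rfl) hxy⟩
      · intro ε hε
        obtain ⟨ε', hε', hp⟩ := hmul ε hε (SetRel.id : Set (G × G)) (cs_idRel h)
        exact ⟨ε', hε', fun g x y hxy => hp x y g g hxy (SetRel.mem_id.mpr rfl)⟩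
    · rintro ⟨hL, hR⟩
      constructor
      · intro ε hε δ hδ
        obtain ⟨ε', hε', hPr⟩ := hR ε hε
        obtain ⟨δ', hδ', hPl⟩ := hL δ hδ
        refine ⟨relComp ε' δ', cs_comp h hε' hδ', ?_⟩
        intro x₁ y₁ x₂ y₂ h1 h2
        exact ⟨y₁ * x₂, hPr x₂ x₁ y₁ h1, hPl y₁ x₂ y₂ h2⟩
      · intro ε hε
        obtain ⟨ε₁, hε₁, hP1⟩ := hL ε hε
        obtain ⟨ε₂, hε₂, hP2⟩ := hR ε₁ hε₁
        refine ⟨relInv ε₂, cs_inv h hε₂, ?_⟩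
        intro x y hxy
        have h2 := hP2 y⁻¹ _ _ (hP1 x⁻¹ x y hxy)
        show ((x⁻¹, y⁻¹).2, (x⁻¹, y⁻¹).1) ∈ ε₂
        simpa [mul_assoc] using h2
  · constructor
    · rintro ⟨hL, hR⟩
      set 𝓘 : Set (Set G) := {A | ∃ ε ∈ 𝓔, A ⊆ ball ε 1} with h𝓘
      have hsingle : ∀ g : G, {g} ∈ 𝓘 := by
        intro g
        obtain ⟨ε, hε, hmem⟩ := cs_pair h 1 g
        exact ⟨ε, hε, by rintro x rfl; exact hmem⟩
      have hempty : (∅ : Set G) ∈ 𝓘 :=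
        ⟨(SetRel.id : Set (G × G)), cs_idRel h, by simp⟩
      have hdown : ∀ A ∈ 𝓘, ∀ B : Set G, B ⊆ A → B ∈ 𝓘 := by
        rintro A ⟨ε, hε, hA⟩ B hBA
        exact ⟨ε, hε, hBA.trans hA⟩
      have hun : ∀ A ∈ 𝓘, ∀ B ∈ 𝓘, A ∪ B ∈ 𝓘 := by
        rintro A ⟨ε, hε, hA⟩ B ⟨δ, hδ, hB⟩
        refine ⟨ε ∪ δ, cs_union h hε hδ, ?_⟩
        rintro x (hx | hx)
        · exact Or.inl (hA hx)
        · exact Or.inr (hB hx)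
      have hfin : ∀ A : Set G, A.Finite → A ∈ 𝓘 := by
        intro A hA
        refine Set.Finite.induction_on (motive := fun s _ => s ∈ 𝓘) A hA hempty ?_
        intro a s _ _ ih
        rw [Set.insert_eq]
        exact hun _ (hsingle _) _ ih
      refine ⟨𝓘, ⟨⟨⟨⟨hempty, hdown, hun⟩, hfin, ?_⟩, ?_⟩, ?_⟩, ?_⟩
      · -- sUnion = univ
        apply Set.eq_univ_of_forall
        intro g
        exact ⟨{g}, hsingle g, rfl⟩
      · -- A * B⁻¹ ∈ 𝓘
        rintro A ⟨ε, hε, hA⟩ B ⟨δ, hδ, hB⟩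
        obtain ⟨δ', hδ', hPr⟩ := hR δ hδ
        obtain ⟨δ'', hδ'', hPl⟩ := hL (relInv δ') (cs_inv h hδ')
        refine ⟨relComp ε δ'', cs_comp h hε hδ'', ?_⟩
        rintro x ⟨a, ha, c, hc, rfl⟩
        rw [Set.mem_inv] at hc
        have h1 : ((1 : G), c) ∈ relInv δ' := by
          show (c, 1) ∈ δ'
          simpa using hPr c 1 c⁻¹ (hB hc)
        have h2 : (a, a * c) ∈ δ'' := by simpa using hPl a 1 c h1
        exact ⟨a, hA ha, h2⟩
      · -- invariance
        rintro A ⟨ε, hε, hA⟩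
        obtain ⟨ε₁, hε₁, hP1⟩ := hL ε hε
        obtain ⟨ε₂, hε₂, hP2⟩ := hR ε₁ hε₁
        refine ⟨ε₂, hε₂, ?_⟩
        rintro x ⟨g, a, ha, rfl⟩
        have h1 := hP1 g⁻¹ 1 a (hA ha)
        have h2 := hP2 g _ _ h1
        show (1, g⁻¹ * a * g) ∈ ε₂
        simpa [mul_assoc] using h2
      · -- 𝓔 = EI 𝓘
        ext ε
        constructor
        · intro hε
          refine ⟨h.1.1 ε hε, (fun p => p.2 * p.1⁻¹) '' ε, ?_, ?_⟩
          · obtain ⟨ε', hε', hPr⟩ := hR ε hε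
            refine ⟨ε', hε', ?_⟩
            rintro z ⟨⟨x, y⟩, hxy, rfl⟩
            have := hPr x⁻¹ x y hxy
            show (1, y * x⁻¹) ∈ ε'
            simpa using this
          · rintro ⟨x, y⟩ hxy
            exact Or.inr ⟨y * x⁻¹, ⟨(x, y), hxy, rfl⟩, by simp [mul_assoc]⟩
        · rintro ⟨hid, A, ⟨δ, hδ, hA⟩, hsub⟩
          obtain ⟨δ', hδ', hPr⟩ := hR δ hδ
          refine h.2 δ' hδ' ε hid (hsub.trans ?_)
          rintro ⟨x, y⟩ (h1 | ⟨a, ha, h1⟩)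
          · rw [show y = x from h1]
            simpa using hPr x 1 1 (h.1.1 δ hδ (SetRel.mem_id.mpr rfl))
          · rw [show y = a * x from h1]
            simpa using hPr x 1 a (hA ha)
    · rintro ⟨𝓘, ⟨hGB, hinvar⟩, rfl⟩
      constructor
      · intro ε hε
        obtain ⟨hid, A, hA, hsub⟩ := hε
        refine ⟨entOf {x : G | ∃ g : G, ∃ a ∈ A, x = g⁻¹ * a * g},
          ⟨fun p hp => Or.inl (SetRel.mem_id.mp hp).symm,
            _, hinvar A hA, le_refl _⟩, ?_⟩
        intro g x y hxy
        rcases hsub hxy with h1 | ⟨a, ha, h1⟩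
        · exact Or.inl (by rw [show y = x from h1])
        · refine Or.inr ⟨g * a * g⁻¹, ⟨g⁻¹, a, ha, by group⟩, ?_⟩
          rw [show y = a * x from h1]; group
      · intro ε hε
        obtain ⟨hid, A, hA, hsub⟩ := hε
        refine ⟨entOf A,
          ⟨fun p hp => Or.inl (SetRel.mem_id.mp hp).symm, A, hA, le_refl _⟩, ?_⟩
        intro g x y hxy
        rcases hsub hxy with h1 | ⟨a, ha, h1⟩
        · exact Or.inl (by rw [show y = x from h1])
        · exact Or.inr ⟨a, ha, by rw [show y = a * x from h1, mul_assoc]⟩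
end
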